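/- Let X, Y, P be discrete random variables (taking finitely many values with positive probability). If for all values x, y, p one has P(Y=y | X=x, P=p) ≤ P(Y=y | P=p), then in fact P(Y=y | X=x, P=p) = P(Y=y | P=p) for all x, y, p; i.e., X and Y are conditionally independent given P. -/

import Mathlib

open Finset

/-- If conditioning on `X` never raises the conditional probability of any outcome of `Y`
given the past `P`, then all such conditional probabilities are unchanged, i.e. `X ⊥ Y | P`. -/
theorem stmt_0 {X Y P : Type*} [Fintype X] [Fintype Y] [Fintype P]
    (μ : X × Y × P → ℝ)
    (hpos : ∀ a, 0 ≤ μ a) (hsum : ∑ a, μ a = 1)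
    (hle : ∀ (x : X) (y : Y) (p : P),
      0 < ∑ y', μ (x, y', p) →
      0 < ∑ x', ∑ y', μ (x', y', p) →
      μ (x, y, p) / ∑ y', μ (x, y', p) ≤
        (∑ x', μ (x', y, p)) / ∑ x', ∑ y', μ (x', y', p)) :
    ∀ (x : X) (y : Y) (p : P),
      0 < ∑ y', μ (x, y', p) →
      0 < ∑ x', ∑ y', μ (x', y', p) →
      μ (x, y, p) / ∑ y', μ (x, y', p) =
        (∑ x', μ (x', y, p)) / ∑ x', ∑ y', μ (x', y', p) := by
  intro x y p hx hM
  set m : X → ℝ := fun x' => ∑ y', μ (x', y', p) with hm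
  set M : ℝ := ∑ x', ∑ y', μ (x', y', p) with hMdef
  set q : ℝ := (∑ x', μ (x', y, p)) / M with hq
  -- termwise bound μ (x', y, p) ≤ m x' * q
  have key : ∀ x' : X, μ (x', y, p) ≤ m x' * q := by
    intro x'
    rcases eq_or_lt_of_le (Finset.sum_nonneg fun y' _ => hpos (x', y', p)) with h0 | h0
    · have hz : μ (x', y, p) = 0 := by
        have := (Finset.sum_eq_zero_iff_of_nonneg (fun y' _ => hpos (x', y', p))).mp h0.symm
        exact this y (Finset.mem_univ y)
      have hq0 : 0 ≤ q := by
        apply div_nonneg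
        · exact Finset.sum_nonneg fun x'' _ => hpos (x'', y, p)
        · exact le_of_lt hM
      have : m x' = 0 := h0.symm
      rw [hz, this, zero_mul]
    · have := hle x' y p h0 hM
      calc μ (x', y, p) = (μ (x', y, p) / m x') * m x' := by
            exact (div_mul_cancel₀ _ (ne_of_gt h0)).symm
        _ ≤ q * m x' := by
            apply mul_le_mul_of_nonneg_right this (le_of_lt h0)
        _ = m x' * q := mul_comm _ _
  -- sums are equal
  have hsumeq : ∑ x', μ (x', y, p) = ∑ x', m x' * q := by
    rw [← Finset.sum_mul, hq]
    field_simp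
    rfl
  -- so termwise equal
  have heq : ∀ x' ∈ (Finset.univ : Finset X), μ (x', y, p) = m x' * q := by
    intro x' _
    exact ((Finset.sum_eq_sum_iff_of_le (fun i _ => key i)).mp hsumeq x' (Finset.mem_univ x'))
  have hx' := heq x (Finset.mem_univ x)
  rw [hx']
  field_simp
  exact mul_comm _ _
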